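/- Let r ≥ 0, let D ∈ D_n be a Dyck word, and let D' = Ψ_r(D). Then the number of multitunnels of D with midpoint at x = n+r (i.e., decompositions D = ABC with B a nonempty Dyck word and length(A) = length(C) + 2r) equals the number of arches of D' in x ≥ 2r (i.e., decompositions D' = X uB'd Y with X, Y, B' Dyck words, uB'd touching height 0 only at its endpoints, and length(X) ≥ 2r). -/

import Mathlib

attribute [local instance] Classical.propDecidable

namespace DyckBij

/-- A word over `Bool` (`true` = up-step `u`, `false` = down-step `d`) is a Dyck word:
equally many `u`'s and `d`'s, and every prefix has at least as many `u`'s as `d`'s. -/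
def IsDyck (w : List Bool) : Prop :=
  w.count false = w.count true ∧
    ∀ p : List Bool, p <+: w → p.count false ≤ p.count true

/-- `Matched w i j`: the `u` at (0-indexed) position `i` of `w` is matched (as in matched
parentheses) with the `d` at position `j`, i.e. `w = A u B d C` with `B` a Dyck word,
`|A| = i` and `j = i + |B| + 1`. -/
def Matched (w : List Bool) (i j : ℕ) : Prop :=
  ∃ A B C : List Bool, IsDyck B ∧ w = A ++ true :: (B ++ false :: C) ∧
    A.length = i ∧ j = i + B.length + 1

/-- Positions `i` and `j` form a matched pair of steps of `w`. -/
def MatchPair (w : List Bool) (i j : ℕ) : Prop :=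
  Matched w i j ∨ Matched w j i

/-- The 0-indexed reading order `σ^{(r)}` on a word of length `L`: the first `2r` positions
are read in order, and the remaining positions are read in zigzag
`2r, L-1, 2r+1, L-2, …` (0-indexed). For `r = 0` this is the zigzag order `σ`. -/
def zigR (r L p : ℕ) : ℕ :=
  if p < 2 * r then p
  else if p % 2 = 0 then p / 2 + r
  else L + r - (p + 1) / 2

/-- The bijection `Ψ_r`: the `p`-th letter of `Ψ_r(w)` is `u` iff the match of the
`σ^{(r)}_p`-th step of `w` does not occur among the previously read steps
`σ^{(r)}_0, …, σ^{(r)}_{p-1}`. -/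
noncomputable def psiR (r : ℕ) (w : List Bool) : List Bool :=
  List.ofFn fun p : Fin w.length =>
    if ∃ p' : ℕ, p' < (p : ℕ) ∧
        MatchPair w (zigR r w.length p') (zigR r w.length (p : ℕ))
    then false else true

/-- The bijection `Ψ = Ψ_0`. -/
noncomputable def psi : List Bool → List Bool := psiR 0

/-- Number of tunnels of `w` with `|A| = |C| + 2r` (midpoint at `x = n + r`),
i.e. decompositions `w = A u B d C` with `B` a Dyck word; tunnels are indexed by `|A|`. -/
noncomputable def tunEq (r : ℕ) (w : List Bool) : ℕ :=
  {i : ℕ | ∃ A B C : List Bool, IsDyck B ∧ w = A ++ true :: (B ++ false :: C) ∧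
    A.length = i ∧ A.length = C.length + 2 * r}.ncard

/-- Number of tunnels of `w` with `|A| > |C| + 2r` (midpoint in `x > n + r`). -/
noncomputable def tunGt (r : ℕ) (w : List Bool) : ℕ :=
  {i : ℕ | ∃ A B C : List Bool, IsDyck B ∧ w = A ++ true :: (B ++ false :: C) ∧
    A.length = i ∧ C.length + 2 * r < A.length}.ncard

/-- Number of tunnels of `w` with `|A| ≤ |C| + 2r` (midpoint in `x ≤ n + r`). -/
noncomputable def tunLe (r : ℕ) (w : List Bool) : ℕ :=
  {i : ℕ | ∃ A B C : List Bool, IsDyck B ∧ w = A ++ true :: (B ++ false :: C) ∧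
    A.length = i ∧ A.length ≤ C.length + 2 * r}.ncard

/-- Number of centered tunnels `ct(w)`. -/
noncomputable def ctun (w : List Bool) : ℕ := tunEq 0 w

/-- Number of right tunnels `rt(w)`. -/
noncomputable def rtun (w : List Bool) : ℕ := tunGt 0 w

/-- Number of left tunnels `lt(w)`: tunnels with `|A| < |C|`. -/
noncomputable def ltun (w : List Bool) : ℕ :=
  {i : ℕ | ∃ A B C : List Bool, IsDyck B ∧ w = A ++ true :: (B ++ false :: C) ∧
    A.length = i ∧ A.length < C.length}.ncard

/-- Number of multitunnels of `w` with `|A| = |C| + 2r` (midpoint at `x = n + r`):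
decompositions `w = A B C` with `B` a nonempty Dyck word, indexed by `(|A|, |B|)`. -/
noncomputable def mtunEq (r : ℕ) (w : List Bool) : ℕ :=
  {q : ℕ × ℕ | ∃ A B C : List Bool, IsDyck B ∧ B ≠ [] ∧ w = A ++ B ++ C ∧
    A.length = q.1 ∧ B.length = q.2 ∧ A.length = C.length + 2 * r}.ncard

/-- Number of centered multitunnels `cmt(w)`. -/
noncomputable def cmtun (w : List Bool) : ℕ := mtunEq 0 w

/-- Number of hills `h(w)`: decompositions `w = X u d Y` with `X, Y` Dyck words. -/
noncomputable def numHills (w : List Bool) : ℕ :=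
  {i : ℕ | ∃ X Y : List Bool, IsDyck X ∧ IsDyck Y ∧
    w = X ++ true :: false :: Y ∧ X.length = i}.ncard

/-- Number of hills of `w` lying in `x > 2r`, i.e. with `|X| ≥ 2r`. -/
noncomputable def numHillsAfter (r : ℕ) (w : List Bool) : ℕ :=
  {i : ℕ | ∃ X Y : List Bool, IsDyck X ∧ IsDyck Y ∧
    w = X ++ true :: false :: Y ∧ X.length = i ∧ 2 * r ≤ X.length}.ncard

/-- Number of arches (equivalently, returns) `ret(w)`: decompositions
`w = X (u B d) Y` with `X, B, Y` Dyck words. -/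
noncomputable def numArches (w : List Bool) : ℕ :=
  {i : ℕ | ∃ X B Y : List Bool, IsDyck X ∧ IsDyck B ∧ IsDyck Y ∧
    w = X ++ true :: (B ++ false :: Y) ∧ X.length = i}.ncard

/-- Number of arches of `w` lying in `x ≥ 2r`, i.e. with `|X| ≥ 2r`. -/
noncomputable def numArchesAfter (r : ℕ) (w : List Bool) : ℕ :=
  {i : ℕ | ∃ X B Y : List Bool, IsDyck X ∧ IsDyck B ∧ IsDyck Y ∧
    w = X ++ true :: (B ++ false :: Y) ∧ X.length = i ∧ 2 * r ≤ X.length}.ncard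

/-- Number of odd rises `odr(w)`: `u`-steps at odd 1-indexed positions
(even 0-indexed positions). -/
noncomputable def oddRises (w : List Bool) : ℕ :=
  {p : ℕ | p < w.length ∧ p % 2 = 0 ∧ w.getD p false = true}.ncard

/-- Number of even rises `er(w)`: `u`-steps at even 1-indexed positions
(odd 0-indexed positions). -/
noncomputable def evenRises (w : List Bool) : ℕ :=
  {p : ℕ | p < w.length ∧ p % 2 = 1 ∧ w.getD p false = true}.ncard

/-- Number of odd rises of `w` at 1-indexed positions `> 2r`. -/
noncomputable def oddRisesAfter (r : ℕ) (w : List Bool) : ℕ :=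
  {p : ℕ | p < w.length ∧ p % 2 = 0 ∧ 2 * r ≤ p ∧ w.getD p false = true}.ncard

/-- Number of even rises of `w` at 1-indexed positions `> 2r`. -/
noncomputable def evenRisesAfter (r : ℕ) (w : List Bool) : ℕ :=
  {p : ℕ | p < w.length ∧ p % 2 = 1 ∧ 2 * r ≤ p ∧ w.getD p false = true}.ncard

/-- Number of `u`-steps of `w` at 1-indexed positions `≤ 2r`. -/
noncomputable def upstepsBefore (r : ℕ) (w : List Bool) : ℕ :=
  {p : ℕ | p < w.length ∧ p < 2 * r ∧ w.getD p false = true}.ncard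

/-- Number of peaks of `w`: occurrences of the factor `u d`. -/
noncomputable def numPeaks (w : List Bool) : ℕ :=
  {i : ℕ | i + 2 ≤ w.length ∧ w.getD i false = true ∧ w.getD (i + 1) true = false}.ncard

/-- Number of occurrences in `w` of a factor of length 3 beginning with `u`
and ending with `d` (occurrences of `u⋆d`). -/
noncomputable def numUStarD (w : List Bool) : ℕ :=
  {i : ℕ | i + 3 ≤ w.length ∧ w.getD i false = true ∧ w.getD (i + 2) true = false}.ncard

/-- `ih(w)`: 1 if `w` begins with the factor `u d`, else 0. -/
noncomputable def initHill (w : List Bool) : ℕ :=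
  if w.take 2 = [true, false] then 1 else 0

/-- `fh(w)`: 1 if `w = X u d` with `X` a Dyck word, else 0. -/
noncomputable def finHill (w : List Bool) : ℕ :=
  if ∃ X : List Bool, IsDyck X ∧ w = X ++ [true, false] then 1 else 0

/-- `π` avoids the pattern 321. -/
def Avoids321 {n : ℕ} (π : Equiv.Perm (Fin n)) : Prop :=
  ¬ ∃ i j k : Fin n, i < j ∧ j < k ∧ π k < π j ∧ π j < π i

/-- `π` avoids the pattern 132. -/
def Avoids132 {n : ℕ} (π : Equiv.Perm (Fin n)) : Prop :=
  ¬ ∃ i j k : Fin n, i < j ∧ j < k ∧ π i < π k ∧ π k < π j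

/-- Number of fixed points of `π`. -/
noncomputable def fixedPts {n : ℕ} (π : Equiv.Perm (Fin n)) : ℕ :=
  {i : Fin n | π i = i}.ncard

/-- Number of excedances of `π`. -/
noncomputable def excedances {n : ℕ} (π : Equiv.Perm (Fin n)) : ℕ :=
  {i : Fin n | i < π i}.ncard

/-- Number of descents of `π`. -/
noncomputable def descents {n : ℕ} (π : Equiv.Perm (Fin n)) : ℕ :=
  {i : ℕ | ∃ (h1 : i < n) (h2 : i + 1 < n), π ⟨i + 1, h2⟩ < π ⟨i, h1⟩}.ncard

/-- `α_r(π) = #{i : π(i) = i + r}` (stated 0-indexed, equivalent to the 1-indexed version). -/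
noncomputable def alphaStat {n : ℕ} (r : ℕ) (π : Equiv.Perm (Fin n)) : ℕ :=
  {i : Fin n | (π i : ℕ) = (i : ℕ) + r}.ncard

/-- `β_r(π) = #{i : i > r, π(i) = i}` (for 1-indexed `i`; 0-indexed this is `r ≤ i`). -/
noncomputable def betaStat {n : ℕ} (r : ℕ) (π : Equiv.Perm (Fin n)) : ℕ :=
  {i : Fin n | r ≤ (i : ℕ) ∧ π i = i}.ncard

lemma count_add_count (l : List Bool) : l.count true + l.count false = l.length := by
  induction l with
  | nil => simp
  | cons b t ih => cases b <;> simp [List.count_cons] <;> omega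

/-- positions description of count -/
lemma count_eq_card (l : List Bool) (b : Bool) :
    l.count b = ((Finset.range l.length).filter (fun i => l.getD i false = b)).card := by
  induction l using List.reverseRecOn with
  | nil => simp
  | append_singleton t a ih =>
    rw [List.count_append, List.length_append]
    simp only [List.length_singleton]
    rw [Finset.range_add_one, Finset.filter_insert]
    have hg : (t ++ [a]).getD t.length false = a := by
      rw [List.getD_append_right _ _ _ _ le_rfl]
      simp
    have hfilter : (Finset.range t.length).filter (fun i => (t ++ [a]).getD i false = b)
        = (Finset.range t.length).filter (fun i => t.getD i false = b) := by
      apply Finset.filter_congr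
      intro i hi
      rw [Finset.mem_range] at hi
      rw [List.getD_append _ _ _ _ hi]
    by_cases hab : a = b
    · rw [if_pos (by rw [hg, hab]), Finset.card_insert_of_notMem (by simp), hfilter, ← ih]
      subst hab
      simp
    · rw [if_neg (by rw [hg]; exact hab), hfilter, ← ih]
      have h0 : [a].count b = 0 := by
        simp [List.count_singleton']
        intro h; exact absurd h hab
      omega

lemma suffix_count (w s : List Bool) (hw : IsDyck w) (hs : s <:+ w) :
    s.count true ≤ s.count false := by
  obtain ⟨p, hp⟩ := hs
  have h1 := hw.2 p ⟨s, hp⟩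
  have h2 := hw.1
  rw [← hp] at h2
  simp [List.count_append] at h2
  omega

lemma isDyck_nil : IsDyck ([] : List Bool) :=
  ⟨by simp, fun p hp => by simp [List.prefix_nil.1 hp]⟩

/-- first return decomposition -/
lemma first_return {D : List Bool} (hD : IsDyck D) (hne : D ≠ []) :
    ∃ M C : List Bool, IsDyck M ∧ IsDyck C ∧ D = true :: (M ++ false :: C) := by
  have hlen : 0 < D.length := List.length_pos_iff.2 hne
  have htake1 : D.take 1 = [D.getD 0 false] := by
    cases D with
    | nil => simp at hlen
    | cons a t => simp [List.take_succ]
  have hhead : D.getD 0 false = true := by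
    rcases hh : D.getD 0 false with _ | _
    · exfalso
      have h1 := hD.2 (D.take 1) (List.take_prefix 1 D)
      rw [htake1, hh] at h1; simp at h1
    · rfl
  have hex : ∃ k, 1 ≤ k ∧ (D.take k).count false = (D.take k).count true := by
    refine ⟨D.length, hlen, ?_⟩
    rw [List.take_length]; exact hD.1
  classical
  set j := Nat.find hex with hjdef
  have hj : 1 ≤ j ∧ (D.take j).count false = (D.take j).count true := Nat.find_spec hex
  have hjmin : ∀ k < j, ¬(1 ≤ k ∧ (D.take k).count false = (D.take k).count true) :=
    fun k hk => Nat.find_min hex hk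
  have hjle : j ≤ D.length := by
    by_contra h
    push_neg at h
    exact hjmin D.length h ⟨hlen, by rw [List.take_length]; exact hD.1⟩
  have hstrict : ∀ k, 1 ≤ k → k < j → (D.take k).count false < (D.take k).count true := by
    intro k h1 h2
    have hne2 := hjmin k h2
    have hle := hD.2 (D.take k) (List.take_prefix k D)
    rcases lt_or_eq_of_le hle with h | h
    · exact h
    · exact absurd ⟨h1, h⟩ hne2
  have hj2 : 2 ≤ j := by
    by_contra h
    push_neg at h
    have h1j := hj.1
    have hj1 : j = 1 := by omega
    have hb := hj.2
    rw [hj1, htake1, hhead] at hb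
    simp at hb
  have hsplit : D.take j = D.take (j-1) ++ [D.getD (j-1) false] := by
    have hjj : j - 1 + 1 = j := by omega
    rw [← hjj, List.take_succ]
    congr 1
    rw [List.getD_eq_getElem D false (by omega), List.getElem?_eq_getElem (by omega)]
    rfl
  have hlast : D.getD (j-1) false = false := by
    by_contra h
    have h' : D.getD (j-1) false = true := by
      rcases hx : D.getD (j-1) false
      · exact absurd hx h
      · rfl
    have hb := hj.2
    rw [hsplit, h'] at hb
    simp [List.count_append, List.count_singleton'] at hb
    have := hstrict (j-1) (by omega) (by omega)
    omega
  set M := (D.take (j-1)).drop 1 with hM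
  set C := D.drop j with hC
  have htk : D.take (j-1) = true :: M := by
    rw [hM]
    cases hD' : D with
    | nil => simp [hD'] at hlen
    | cons a t =>
      have ha : a = true := by
        have hh := hhead; rw [hD'] at hh; simpa using hh
      subst ha
      have hj1 : j - 1 = (j - 2) + 1 := by omega
      rw [hj1, List.take_succ_cons]
      simp
  have hMlen : M.length = j - 2 := by
    have hl : (D.take (j-1)).length = j - 1 := by
      rw [List.length_take]; omega
    rw [htk] at hl; simp at hl; omega
  have hDeq : D = true :: (M ++ false :: C) := by
    have h1 : D = D.take j ++ C := by rw [hC, List.take_append_drop]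
    rw [hsplit, hlast, htk] at h1
    simpa using h1
  have hbM : (M.count false) = M.count true := by
    have hb := hj.2
    rw [hsplit, hlast, htk] at hb
    simp [List.count_append, List.count_cons] at hb
    omega
  refine ⟨M, C, ?_, ?_, hDeq⟩
  · refine ⟨hbM, ?_⟩
    intro p hp
    by_contra hcon
    push_neg at hcon
    have hpre : (true :: p) <+: D := by
      calc (true :: p) <+: (true :: M) := List.cons_prefix_cons.2 ⟨rfl, hp⟩
        _ <+: D := by rw [← htk]; exact List.take_prefix _ _
    have hcnt : p.count false = p.count true + 1 := by
      have hle := hD.2 _ hpre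
      simp [List.count_cons] at hle
      omega
    have hplen : p.length ≤ M.length := hp.length_le
    have hfind := hjmin (p.length + 1) (by omega)
    apply hfind
    refine ⟨by omega, ?_⟩
    have heq : D.take (p.length + 1) = true :: p := by
      have h := List.prefix_iff_eq_take.1 hpre
      simpa using h.symm
    rw [heq]
    simp [List.count_cons]
    omega
  · constructor
    · have hb := hj.2
      have h1 := hD.1
      have hsum : (D.take j).count false + C.count false = D.count false := by
        rw [hC, ← List.count_append, List.take_append_drop]
      have hsum2 : (D.take j).count true + C.count true = D.count true := by
        rw [hC, ← List.count_append, List.take_append_drop]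
      omega
    · intro p hp
      have hpre : D.take j ++ p <+: D := by
        obtain ⟨t, ht⟩ := hp
        exact ⟨t, by rw [List.append_assoc, ht, hC, List.take_append_drop]⟩
      have h1 := hD.2 _ hpre
      have hb := hj.2
      simp [List.count_append] at h1
      omega

lemma Matched.lt {w : List Bool} {i j : ℕ} (h : Matched w i j) : i < j := by
  obtain ⟨A, B, C, _, _, hA, hj⟩ := h; omega

lemma Matched.lt_length {w : List Bool} {i j : ℕ} (h : Matched w i j) : j < w.length := by
  obtain ⟨A, B, C, _, hw, hA, hj⟩ := h
  rw [hw]; simp; omega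

lemma Matched.getD_left {w : List Bool} {i j : ℕ} (h : Matched w i j) :
    w.getD i false = true := by
  obtain ⟨A, B, C, _, hw, hA, hj⟩ := h
  rw [hw, List.getD_append_right _ _ _ _ (by omega : A.length ≤ i)]
  have h0 : i - A.length = 0 := by omega
  rw [h0]; simp

lemma Matched.getD_right {w : List Bool} {i j : ℕ} (h : Matched w i j) :
    w.getD j false = false := by
  obtain ⟨A, B, C, _, hw, hA, hj⟩ := h
  have hw2 : w = (A ++ true :: B) ++ false :: C := by rw [hw]; simp
  have hlen2 : (A ++ true :: B).length = j := by simp; omega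
  rw [hw2, List.getD_append_right _ _ _ _ hlen2.le, hlen2, Nat.sub_self]
  simp

lemma MatchPair.symm {w : List Bool} {i j : ℕ} (h : MatchPair w i j) : MatchPair w j i :=
  h.elim Or.inr Or.inl

lemma MatchPair.ne {w : List Bool} {i j : ℕ} (h : MatchPair w i j) : i ≠ j := by
  rcases h with h | h
  · exact Nat.ne_of_lt h.lt
  · exact (Nat.ne_of_lt h.lt).symm

lemma MatchPair.lt_length {w : List Bool} {i j : ℕ} (h : MatchPair w i j) :
    i < w.length ∧ j < w.length := by
  rcases h with h | h
  · exact ⟨lt_trans h.lt h.lt_length, h.lt_length⟩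
  · exact ⟨h.lt_length, lt_trans h.lt h.lt_length⟩

/-- shifting a match into an ambient word -/
lemma Matched.shift {B : List Bool} {u v : ℕ} (h : Matched B u v) (A C : List Bool) :
    Matched (A ++ B ++ C) (A.length + u) (A.length + v) := by
  obtain ⟨A', B', C', hB', hw, hA', hv⟩ := h
  refine ⟨A ++ A', B', C' ++ C, hB', ?_, by simp [hA'], by omega⟩
  rw [hw]; simp

lemma MatchPair.shift {B : List Bool} {u v : ℕ} (h : MatchPair B u v) (A C : List Bool) :
    MatchPair (A ++ B ++ C) (A.length + u) (A.length + v) := by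
  rcases h with h | h
  · exact Or.inl (h.shift A C)
  · exact Or.inr (h.shift A C)

lemma match_exists_aux : ∀ (N : ℕ) (D : List Bool), D.length ≤ N → IsDyck D →
    ∀ i < D.length, ∃ j, MatchPair D i j := by
  intro N
  induction N with
  | zero => intro D hl _ i hi; omega
  | succ N ih =>
    intro D hl hD i hi
    have hne : D ≠ [] := by intro h; rw [h] at hi; simp at hi
    obtain ⟨M, C, hM, hC, hDeq⟩ := first_return hD hne
    have hlen : D.length = M.length + C.length + 2 := by rw [hDeq]; simp; omega
    have hm0 : Matched D 0 (M.length + 1) :=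
      ⟨[], M, C, hM, by simpa using hDeq, by simp, by simp⟩
    rcases Nat.lt_or_ge i 1 with h0 | h1
    · have : i = 0 := by omega
      exact ⟨M.length + 1, this ▸ Or.inl hm0⟩
    rcases Nat.lt_or_ge i (M.length + 1) with hiM | hiM
    · -- i - 1 inside M
      obtain ⟨j, hj⟩ := ih M (by omega) hM (i - 1) (by omega)
      have hsh := hj.shift [true] (false :: C)
      have hfold : [true] ++ M ++ (false :: C) = D := by rw [hDeq]; simp
      rw [hfold] at hsh
      simp at hsh
      refine ⟨1 + j, ?_⟩
      have : 1 + (i - 1) = i := by omega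
      rwa [this] at hsh
    rcases Nat.eq_or_lt_of_le hiM with hieq | higt
    · exact ⟨0, Or.inr (by rw [hieq] at hm0; exact hm0)⟩
    · -- i inside C
      obtain ⟨j, hj⟩ := ih C (by omega) hC (i - (M.length + 2)) (by omega)
      have hsh := hj.shift (true :: M ++ [false]) []
      have hfold : (true :: M ++ [false]) ++ C ++ [] = D := by rw [hDeq]; simp
      rw [hfold] at hsh
      simp at hsh
      refine ⟨M.length + 2 + j, ?_⟩
      have : M.length + 2 + (i - (M.length + 2)) = i := by omega
      rwa [this] at hsh

lemma match_exists {D : List Bool} (hD : IsDyck D) {i : ℕ} (hi : i < D.length) :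
    ∃ j, MatchPair D i j :=
  match_exists_aux D.length D le_rfl hD i hi

lemma matched_right_lt_false {D : List Bool} {i j j' : ℕ}
    (h1 : Matched D i j) (h2 : Matched D i j') (hlt : j < j') : False := by
  obtain ⟨A1, B1, C1, hB1, hw1, hA1, hj1⟩ := h1
  obtain ⟨A2, B2, C2, hB2, hw2, hA2, hj2⟩ := h2
  have hAA : A1 = A2 ∧ true :: (B1 ++ false :: C1) = true :: (B2 ++ false :: C2) :=
    List.append_inj (hw1 ▸ hw2) (by omega)
  have hBB : B1 ++ false :: C1 = B2 ++ false :: C2 := by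
    have h := hAA.2; simpa using h
  have hlt2 : B1.length + 1 ≤ B2.length := by omega
  have hpre : B1 ++ [false] <+: B2 := by
    have hL : (B1 ++ false :: C1).take (B1.length + 1) = B1 ++ [false] := by
      rw [List.take_append]
      simp
    have hR : (B2 ++ false :: C2).take (B1.length + 1) = B2.take (B1.length + 1) :=
      List.take_append_of_le_length hlt2
    have : B1 ++ [false] = B2.take (B1.length + 1) := by rw [← hL, ← hR, hBB]
    rw [this]
    exact List.take_prefix _ _
  have hcnt := hB2.2 _ hpre
  simp [List.count_append] at hcnt
  rw [hB1.1] at hcnt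
  omega

lemma matched_left_lt_false {D : List Bool} {i i' j : ℕ}
    (h1 : Matched D i j) (h2 : Matched D i' j) (hlt : i < i') : False := by
  obtain ⟨A1, B1, C1, hB1, hw1, hA1, hj1⟩ := h1
  obtain ⟨A2, B2, C2, hB2, hw2, hA2, hj2⟩ := h2
  have hw1' : D = (A1 ++ true :: B1) ++ false :: C1 := by rw [hw1]; simp
  have hw2' : D = (A2 ++ true :: B2) ++ false :: C2 := by rw [hw2]; simp
  have hPP : A1 ++ true :: B1 = A2 ++ true :: B2 ∧ false :: C1 = false :: C2 :=
    List.append_inj (hw1' ▸ hw2') (by simp; omega)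
  have hdrop := congrArg (List.drop i') hPP.1
  rw [List.drop_append, List.drop_append] at hdrop
  rw [List.drop_of_length_le (by omega : A1.length ≤ i'),
      List.drop_of_length_le (by omega : A2.length ≤ i')] at hdrop
  have hii : i' - A1.length = (i' - i - 1) + 1 := by omega
  have hii2 : i' - A2.length = 0 := by omega
  rw [hii, hii2, List.drop_succ_cons, List.drop_zero] at hdrop
  simp at hdrop
  -- hdrop : B1.drop (i' - i - 1) = true :: B2
  have hsuf : (true :: B2) <:+ B1 := by
    rw [← hdrop]; exact List.drop_suffix _ _
  have hcnt := suffix_count B1 _ hB1 hsuf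
  simp [List.count_cons] at hcnt
  rw [hB2.1] at hcnt
  omega

lemma matched_not_both {D : List Bool} {i j : ℕ}
    (h1 : Matched D i j) (h2 : Matched D j i) : False := by
  have ha := h1.getD_left
  have hb := h2.getD_right
  rw [ha] at hb
  exact Bool.noConfusion hb

lemma matchPair_unique {D : List Bool} {i j k : ℕ}
    (h1 : MatchPair D i j) (h2 : MatchPair D i k) : j = k := by
  rcases h1 with h1 | h1 <;> rcases h2 with h2 | h2
  · rcases Nat.lt_trichotomy j k with h | h | h
    · exact absurd (matched_right_lt_false h1 h2 h) not_false
    · exact h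
    · exact absurd (matched_right_lt_false h2 h1 h) not_false
  · exfalso
    have hx := h1.getD_left
    rw [h2.getD_right] at hx
    exact Bool.noConfusion hx
  · exfalso
    have hx := h2.getD_left
    rw [h1.getD_right] at hx
    exact Bool.noConfusion hx
  · rcases Nat.lt_trichotomy j k with h | h | h
    · exact absurd (matched_left_lt_false h1 h2 h) not_false
    · exact h
    · exact absurd (matched_left_lt_false h2 h1 h) not_false

noncomputable def mfun (D : List Bool) (i : ℕ) : ℕ :=
  if h : ∃ j, MatchPair D i j then h.choose else 0

lemma mfun_spec {D : List Bool} (hD : IsDyck D) {i : ℕ} (hi : i < D.length) :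
    MatchPair D i (mfun D i) := by
  have h : ∃ j, MatchPair D i j := match_exists hD hi
  rw [mfun, dif_pos h]
  exact h.choose_spec

lemma mfun_lt {D : List Bool} (hD : IsDyck D) {i : ℕ} (hi : i < D.length) :
    mfun D i < D.length :=
  ((mfun_spec hD hi).lt_length).2

lemma mfun_eq_of_pair {D : List Bool} (hD : IsDyck D) {i j : ℕ}
    (h : MatchPair D i j) : mfun D i = j :=
  matchPair_unique (mfun_spec hD h.lt_length.1) h

lemma mfun_invol {D : List Bool} (hD : IsDyck D) {i : ℕ} (hi : i < D.length) :
    mfun D (mfun D i) = i :=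
  mfun_eq_of_pair hD ((mfun_spec hD hi).symm)

lemma mfun_ne {D : List Bool} (hD : IsDyck D) {i : ℕ} (hi : i < D.length) :
    mfun D i ≠ i := ((mfun_spec hD hi).symm).ne

lemma mfun_false_lt {D : List Bool} (hD : IsDyck D) {i : ℕ} (hi : i < D.length)
    (hf : D.getD i false = false) : mfun D i < i ∧ D.getD (mfun D i) false = true := by
  rcases mfun_spec hD hi with h | h
  · rw [h.getD_left] at hf; exact Bool.noConfusion hf
  · exact ⟨h.lt, h.getD_left⟩

lemma mfun_true {D : List Bool} (hD : IsDyck D) {i : ℕ} (hi : i < D.length)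
    (ht : D.getD i false = true) : D.getD (mfun D i) false = false := by
  rcases mfun_spec hD hi with h | h
  · exact h.getD_right
  · rw [h.getD_right] at ht; exact Bool.noConfusion ht

lemma length_psiR (r : ℕ) (w : List Bool) : (psiR r w).length = w.length := by
  simp [psiR]

lemma zigR_lt {r n p : ℕ} (hr : r < n) (hp : p < 2 * n) : zigR r (2 * n) p < 2 * n := by
  unfold zigR; split_ifs <;> omega

lemma zigR_inj {r n p p' : ℕ} (hr : r < n) (hp : p < 2 * n) (hp' : p' < 2 * n)
    (h : zigR r (2 * n) p = zigR r (2 * n) p') : p = p' := by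
  unfold zigR at h; split_ifs at h <;> omega

def SpSet (r L p : ℕ) : Finset ℕ := (Finset.range p).image (zigR r L)

noncomputable def FpSet (D : List Bool) (r L p : ℕ) : Finset ℕ :=
  (Finset.range L).filter (fun x => x ∈ SpSet r L p ∧ mfun D x ∉ SpSet r L p)

lemma SpSet_succ (r L p : ℕ) : SpSet r L (p + 1) = insert (zigR r L p) (SpSet r L p) := by
  rw [SpSet, Finset.range_add_one, Finset.image_insert]; rfl

lemma SpSet_mono {r L p : ℕ} : SpSet r L p ⊆ SpSet r L (p + 1) := by
  rw [SpSet_succ]; exact Finset.subset_insert _ _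

lemma SpSet_subset_range {r n p : ℕ} (hr : r < n) (hp : p ≤ 2 * n) :
    SpSet r (2 * n) p ⊆ Finset.range (2 * n) := by
  intro x hx
  rw [SpSet, Finset.mem_image] at hx
  obtain ⟨q, hq, rfl⟩ := hx
  rw [Finset.mem_range] at hq ⊢
  exact zigR_lt hr (by omega)

lemma zigR_not_mem {r n p : ℕ} (hr : r < n) (hp : p < 2 * n) :
    zigR r (2 * n) p ∉ SpSet r (2 * n) p := by
  intro h
  rw [SpSet, Finset.mem_image] at h
  obtain ⟨q, hq, hqe⟩ := h
  rw [Finset.mem_range] at hq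
  have := zigR_inj hr (by omega) hp hqe
  omega

lemma psiR_getD {r n : ℕ} {D : List Bool} (hD : IsDyck D) (hr : r < n)
    (hlen : D.length = 2 * n) {p : ℕ} (hp : p < 2 * n) :
    (psiR r D).getD p false =
      if mfun D (zigR r (2 * n) p) ∈ SpSet r (2 * n) p then false else true := by
  have hp' : p < (psiR r D).length := by rw [length_psiR, hlen]; exact hp
  rw [List.getD_eq_getElem _ _ hp']
  simp only [psiR, List.getElem_ofFn]
  have hiff : (∃ p' : ℕ, p' < p ∧ MatchPair D (zigR r D.length p') (zigR r D.length p)) ↔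
      mfun D (zigR r (2 * n) p) ∈ SpSet r (2 * n) p := by
    rw [hlen]
    constructor
    · rintro ⟨q, hq, hmp⟩
      have := mfun_eq_of_pair hD hmp.symm
      rw [this]
      exact Finset.mem_image.2 ⟨q, Finset.mem_range.2 hq, rfl⟩
    · intro hmem
      rw [SpSet, Finset.mem_image] at hmem
      obtain ⟨q, hq, hqe⟩ := hmem
      rw [Finset.mem_range] at hq
      refine ⟨q, hq, ?_⟩
      rw [hqe]
      have hlt : zigR r (2*n) p < D.length := by rw [hlen]; exact zigR_lt hr hp
      exact (mfun_spec hD hlt).symm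
  by_cases h : mfun D (zigR r (2 * n) p) ∈ SpSet r (2 * n) p
  · rw [if_pos (hiff.2 h), if_pos h]
  · rw [if_neg (fun hc => h (hiff.1 hc)), if_neg h]

lemma take_succ_getD {l : List Bool} {p : ℕ} (hp : p < l.length) :
    l.take (p + 1) = l.take p ++ [l.getD p false] := by
  rw [List.take_succ, List.getElem?_eq_getElem hp, List.getD_eq_getElem _ _ hp]
  rfl

lemma height_lemma {r n : ℕ} {D : List Bool} (hD : IsDyck D) (hr : r < n)
    (hlen : D.length = 2 * n) :
    ∀ p, p ≤ 2 * n →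
    ((psiR r D).take p).count true
      = ((psiR r D).take p).count false + (FpSet D r (2 * n) p).card := by
  intro p
  induction p with
  | zero => intro _; simp [FpSet, SpSet]
  | succ p ih =>
    intro hp1
    have hp : p < 2 * n := by omega
    have hplen : p < (psiR r D).length := by rw [length_psiR, hlen]; exact hp
    have hih := ih (by omega)
    rw [take_succ_getD hplen, List.count_append, List.count_append]
    rw [psiR_getD hD hr hlen hp]
    have hsplt : zigR r (2 * n) p < 2 * n := zigR_lt hr hp
    have hspD : zigR r (2 * n) p < D.length := by omega
    have hmlt : ∀ x < 2 * n, mfun D x < 2 * n := by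
      intro x hx; have := mfun_lt hD (show x < D.length by omega); omega
    have hinv : ∀ x < 2 * n, mfun D (mfun D x) = x := by
      intro x hx; exact mfun_invol hD (by omega)
    have hSsub := @SpSet_mono r (2*n) p
    have hnotmem := zigR_not_mem hr hp
    by_cases hmem : mfun D (zigR r (2 * n) p) ∈ SpSet r (2 * n) p
    · rw [if_pos hmem]
      have hFeq : FpSet D r (2*n) p
          = insert (mfun D (zigR r (2*n) p)) (FpSet D r (2*n) (p+1)) := by
        ext x
        simp only [FpSet, Finset.mem_filter, Finset.mem_insert, Finset.mem_range]
        constructor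
        · rintro ⟨hxL, hxS, hxm⟩
          by_cases hxe : x = mfun D (zigR r (2*n) p)
          · exact Or.inl hxe
          · refine Or.inr ⟨hxL, hSsub hxS, ?_⟩
            rw [SpSet_succ]
            simp only [Finset.mem_insert]
            rintro (hc | hc)
            · apply hxe
              have h2 : mfun D (mfun D x) = mfun D (zigR r (2*n) p) := by rw [hc]
              rwa [hinv x hxL] at h2
            · exact hxm hc
        · rintro (rfl | ⟨hxL, hxS, hxm⟩)
          · refine ⟨hmlt _ hsplt, hmem, ?_⟩
            rw [hinv _ hsplt]
            exact hnotmem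
          · refine ⟨hxL, ?_, fun hc => hxm (hSsub hc)⟩
            rw [SpSet_succ] at hxS
            rcases Finset.mem_insert.1 hxS with hc | hc
            · exfalso
              apply hxm
              rw [hc]
              exact hSsub hmem
            · exact hc
      have hnm : mfun D (zigR r (2*n) p) ∉ FpSet D r (2*n) (p+1) := by
        simp only [FpSet, Finset.mem_filter]
        rintro ⟨_, _, hc⟩
        apply hc
        rw [hinv _ hsplt, SpSet_succ]
        exact Finset.mem_insert_self _ _
      rw [hFeq, Finset.card_insert_of_notMem hnm] at hih
      simp only [List.count_singleton', List.count_nil]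
      simp only [hih]
      simp
      omega
    · rw [if_neg hmem]
      have hFeq : FpSet D r (2*n) (p+1)
          = insert (zigR r (2*n) p) (FpSet D r (2*n) p) := by
        ext x
        simp only [FpSet, Finset.mem_filter, Finset.mem_insert, Finset.mem_range]
        constructor
        · rintro ⟨hxL, hxS, hxm⟩
          rw [SpSet_succ] at hxS
          rcases Finset.mem_insert.1 hxS with hc | hc
          · exact Or.inl hc
          · exact Or.inr ⟨hxL, hc, fun h => hxm (hSsub h)⟩
        · rintro (rfl | ⟨hxL, hxS, hxm⟩)
          · refine ⟨hsplt, ?_, ?_⟩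
            · rw [SpSet_succ]; exact Finset.mem_insert_self _ _
            · rw [SpSet_succ]
              simp only [Finset.mem_insert]
              rintro (hc | hc)
              · exact mfun_ne hD hspD hc
              · exact hmem hc
          · refine ⟨hxL, hSsub hxS, ?_⟩
            rw [SpSet_succ]
            simp only [Finset.mem_insert]
            rintro (hc | hc)
            · apply hmem
              have h2 : mfun D (mfun D x) = mfun D (zigR r (2*n) p) := by rw [hc]
              rw [hinv x hxL] at h2
              rw [← h2]
              exact hxS
            · exact hxm hc
      have hnm : zigR r (2*n) p ∉ FpSet D r (2*n) p := by
        simp only [FpSet, Finset.mem_filter]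
        rintro ⟨_, hc, _⟩
        exact hnotmem hc
      rw [hFeq, Finset.card_insert_of_notMem hnm]
      simp only [List.count_singleton', List.count_nil]
      simp
      omega

lemma SpSet_char {r n b : ℕ} (hr : r < n) (hb : r + b ≤ n) (x : ℕ) :
    x ∈ SpSet r (2*n) (2*r + 2*b) ↔ (x < 2*r + b ∨ (2*n - b ≤ x ∧ x < 2*n)) := by
  constructor
  · intro hx
    rw [SpSet, Finset.mem_image] at hx
    obtain ⟨q, hq, rfl⟩ := hx
    rw [Finset.mem_range] at hq
    unfold zigR
    split_ifs <;> omega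
  · rintro (hx | ⟨hx1, hx2⟩)
    · by_cases hx2 : x < 2*r
      · exact Finset.mem_image.2 ⟨x, Finset.mem_range.2 (by omega), by unfold zigR; split_ifs <;> omega⟩
      · exact Finset.mem_image.2 ⟨2*x - 2*r, Finset.mem_range.2 (by omega),
          by unfold zigR; split_ifs <;> omega⟩
    · exact Finset.mem_image.2 ⟨2*(2*n) + 2*r - 2*x - 1, Finset.mem_range.2 (by omega),
        by unfold zigR; split_ifs <;> omega⟩

lemma matched_middle {D A B C : List Bool} (hD : IsDyck D) (hB : IsDyck B)
    (hw : D = A ++ B ++ C) {y : ℕ} (hy1 : A.length ≤ y) (hy2 : y < A.length + B.length) :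
    A.length ≤ mfun D y ∧ mfun D y < A.length + B.length := by
  obtain ⟨j, hj⟩ := match_exists hB (show y - A.length < B.length by omega)
  have hj2 : j < B.length := hj.lt_length.2
  have hsh := hj.shift A C
  rw [← hw] at hsh
  have hyy : A.length + (y - A.length) = y := by omega
  rw [hyy] at hsh
  have := mfun_eq_of_pair hD hsh
  omega

lemma closed_of_decomp {D A B C : List Bool} (hD : IsDyck D) (hB : IsDyck B)
    (hw : D = A ++ B ++ C) :
    ∀ x < D.length, (x < A.length ∨ A.length + B.length ≤ x) →
      (mfun D x < A.length ∨ A.length + B.length ≤ mfun D x) := by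
  intro x hx hxS
  by_contra hcon
  push_neg at hcon
  obtain ⟨h1, h2⟩ := hcon
  have hmid := matched_middle hD hB hw h1 h2
  rw [mfun_invol hD hx] at hmid
  omega

lemma getD_drop_take (l : List Bool) (u v i : ℕ) (hi : i < v - u) (hv : v ≤ l.length) :
    ((l.take v).drop u).getD i false = l.getD (u + i) false := by
  have h1 : i < ((l.take v).drop u).length := by
    rw [List.length_drop, List.length_take]; omega
  rw [List.getD_eq_getElem _ _ h1, List.getElem_drop, List.getElem_take,
    List.getD_eq_getElem]

lemma count_infix (l : List Bool) (u v : ℕ) (hu : u ≤ v) (hv : v ≤ l.length) (b : Bool) :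
    ((l.take v).drop u).count b
      = ((Finset.Ico u v).filter (fun y => l.getD y false = b)).card := by
  rw [count_eq_card]
  have hlen : ((l.take v).drop u).length = v - u := by
    rw [List.length_drop, List.length_take]; omega
  rw [hlen]
  apply Finset.card_bij' (fun i _ => u + i) (fun y _ => y - u)
  · intro i hi
    simp only [Finset.mem_filter, Finset.mem_range] at hi
    simp only [Finset.mem_filter, Finset.mem_Ico]
    refine ⟨⟨by omega, by omega⟩, ?_⟩
    rw [← getD_drop_take l u v i hi.1 hv]
    exact hi.2
  · intro y hy
    simp only [Finset.mem_filter, Finset.mem_Ico] at hy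
    simp only [Finset.mem_filter, Finset.mem_range]
    refine ⟨by omega, ?_⟩
    rw [getD_drop_take l u v _ (by omega) hv]
    have : u + (y - u) = y := by omega
    rw [this]
    exact hy.2
  · intro i hi
    simp only [Finset.mem_filter, Finset.mem_range] at hi
    omega
  · intro y hy
    simp only [Finset.mem_filter, Finset.mem_Ico] at hy
    omega

lemma decomp_of_closed {D : List Bool} {n : ℕ} (hD : IsDyck D) (hlen : D.length = 2*n)
    {a c : ℕ} (hac : a + c ≤ 2*n)
    (hcl : ∀ x < 2*n, (x < a ∨ 2*n - c ≤ x) → (mfun D x < a ∨ 2*n - c ≤ mfun D x)) :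
    ∃ A B C : List Bool, IsDyck B ∧ D = A ++ B ++ C ∧ A.length = a ∧ C.length = c
      ∧ B.length = 2*n - a - c := by
  have hmid : ∀ y, a ≤ y → y < 2*n - c → (a ≤ mfun D y ∧ mfun D y < 2*n - c) := by
    intro y hy1 hy2
    have hyL : y < 2*n := by omega
    have hmyL : mfun D y < 2*n := by
      have := mfun_lt hD (show y < D.length by omega); omega
    by_contra hcon
    push_neg at hcon
    have hS : mfun D y < a ∨ 2*n - c ≤ mfun D y := by
      rcases Nat.lt_or_ge (mfun D y) a with h | h
      · exact Or.inl h
      · exact Or.inr (hcon h)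
    have := hcl (mfun D y) hmyL hS
    rw [mfun_invol hD (show y < D.length by omega)] at this
    omega
  set B := (D.take (2*n - c)).drop a with hB
  have hBlen : B.length = 2*n - a - c := by
    rw [hB, List.length_drop, List.length_take]; omega
  have hcount : ∀ v, a ≤ v → v ≤ 2*n - c →
      ((Finset.Ico a v).filter (fun y => D.getD y false = false)).card ≤
      ((Finset.Ico a v).filter (fun y => D.getD y false = true)).card := by
    intro v hv1 hv2
    apply Finset.card_le_card_of_injOn (mfun D)
    · intro y hy
      simp only [Finset.mem_coe, Finset.mem_filter, Finset.mem_Ico] at hy ⊢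
      obtain ⟨⟨hy1, hy2⟩, hyf⟩ := hy
      have hyL : y < D.length := by omega
      have hlt := mfun_false_lt hD hyL hyf
      have hm := hmid y hy1 (by omega)
      exact ⟨⟨hm.1, by omega⟩, hlt.2⟩
    · intro y hy y' hy' heq
      simp only [Finset.coe_filter, Set.mem_setOf_eq, Finset.mem_Ico] at hy hy'
      have h1 : mfun D (mfun D y) = mfun D (mfun D y') := by rw [heq]
      rwa [mfun_invol hD (by omega), mfun_invol hD (by omega)] at h1
  have hpairs : ((Finset.Ico a (2*n - c)).filter (fun y => D.getD y false = true)).card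
      = ((Finset.Ico a (2*n - c)).filter (fun y => D.getD y false = false)).card := by
    apply Finset.card_bij' (fun y _ => mfun D y) (fun y _ => mfun D y)
    · intro y hy
      simp only [Finset.mem_filter, Finset.mem_Ico] at hy ⊢
      obtain ⟨⟨hy1, hy2⟩, hyt⟩ := hy
      have hm := hmid y hy1 hy2
      exact ⟨⟨hm.1, hm.2⟩, mfun_true hD (by omega) hyt⟩
    · intro y hy
      simp only [Finset.mem_filter, Finset.mem_Ico] at hy ⊢
      obtain ⟨⟨hy1, hy2⟩, hyf⟩ := hy
      have hm := hmid y hy1 hy2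
      exact ⟨⟨hm.1, hm.2⟩, (mfun_false_lt hD (by omega) hyf).2⟩
    · intro y hy
      simp only [Finset.mem_filter, Finset.mem_Ico] at hy
      exact mfun_invol hD (by omega)
    · intro y hy
      simp only [Finset.mem_filter, Finset.mem_Ico] at hy
      exact mfun_invol hD (by omega)
  have hBDyck : IsDyck B := by
    constructor
    · rw [hB, count_infix D a (2*n - c) (by omega) (by omega),
        count_infix D a (2*n - c) (by omega) (by omega)]
      exact hpairs.symm
    · intro p hp
      have hkeq : p = B.take p.length := List.prefix_iff_eq_take.1 hp
      have hklen : p.length ≤ B.length := hp.length_le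
      have htk : B.take p.length = (D.take (a + p.length)).drop a := by
        rw [hB, List.drop_take, List.drop_take, List.take_take]
        congr 1
        omega
      rw [hkeq, htk]
      rw [count_infix D a (a + p.length) (by omega) (by omega),
        count_infix D a (a + p.length) (by omega) (by omega)]
      exact hcount (a + p.length) (by omega) (by omega)
  refine ⟨D.take a, B, D.drop (2*n - c), hBDyck, ?_, ?_, ?_⟩
  · rw [hB]
    have h1 : D.take a = (D.take (2*n - c)).take a := by
      rw [List.take_take]
      congr 1
      omega
    rw [h1, List.take_append_drop, List.take_append_drop]
  · rw [List.length_take]; omega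
  · constructor
    · rw [List.length_drop]; omega
    · exact hBlen

lemma arch_iff {W : List Bool} (hW : IsDyck W) (p : ℕ) :
    (∃ X B Y : List Bool, IsDyck X ∧ IsDyck B ∧ IsDyck Y ∧
      W = X ++ true :: (B ++ false :: Y) ∧ X.length = p) ↔
    (p < W.length ∧ (W.take p).count false = (W.take p).count true) := by
  constructor
  · rintro ⟨X, B, Y, hX, hB, hY, hw, hp⟩
    constructor
    · rw [hw]; simp; omega
    · have htk : W.take p = X := by
        rw [hw, ← hp, List.take_left]
      rw [htk]
      exact hX.1
  · rintro ⟨hp, hret⟩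
    have hXDyck : IsDyck (W.take p) := by
      refine ⟨hret, ?_⟩
      intro q hq
      exact hW.2 q (hq.trans (List.take_prefix p W))
    have htail : IsDyck (W.drop p) := by
      constructor
      · have h1 := hW.1
        have h2 : (W.take p).count false + (W.drop p).count false = W.count false := by
          rw [← List.count_append, List.take_append_drop]
        have h3 : (W.take p).count true + (W.drop p).count true = W.count true := by
          rw [← List.count_append, List.take_append_drop]
        omega
      · intro q hq
        have hpre : W.take p ++ q <+: W := by
          obtain ⟨t, ht⟩ := hq
          exact ⟨t, by rw [List.append_assoc, ht, List.take_append_drop]⟩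
        have h1 := hW.2 _ hpre
        simp [List.count_append] at h1
        omega
    have hne : W.drop p ≠ [] := by
      intro h
      have := congrArg List.length h
      rw [List.length_drop] at this
      simp at this
      omega
    obtain ⟨M, C, hM, hC, hdeq⟩ := first_return htail hne
    refine ⟨W.take p, M, C, hXDyck, hM, hC, ?_, ?_⟩
    · rw [← hdeq, List.take_append_drop]
    · rw [List.length_take]; omega

lemma FpSet_full_empty {r n : ℕ} {D : List Bool} (hD : IsDyck D) (hr : r < n)
    (hlen : D.length = 2 * n) : FpSet D r (2*n) (2*n) = ∅ := by
  have hSfull : ∀ x, x < 2*n → x ∈ SpSet r (2*n) (2*n) := by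
    intro x hx
    have h2 : 2*r + 2*(n - r) = 2*n := by omega
    have := (SpSet_char hr (by omega : r + (n - r) ≤ n) x).2
    rw [h2] at this
    apply this
    omega
  rw [Finset.eq_empty_iff_forall_notMem]
  intro x hx
  simp only [FpSet, Finset.mem_filter, Finset.mem_range] at hx
  obtain ⟨hxL, _, hxm⟩ := hx
  exact hxm (hSfull _ (by have := mfun_lt hD (show x < D.length by omega); omega))

lemma psiR_isDyck {r n : ℕ} {D : List Bool} (hD : IsDyck D) (hr : r < n)
    (hlen : D.length = 2 * n) : IsDyck (psiR r D) := by
  have hKlen : (psiR r D).length = 2*n := by rw [length_psiR, hlen]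
  constructor
  · have h := height_lemma hD hr hlen (2*n) le_rfl
    rw [FpSet_full_empty hD hr hlen] at h
    simp at h
    rw [← hKlen, List.take_length] at h
    omega
  · intro q hq
    have hqlen : q.length ≤ 2*n := by
      have := hq.length_le; omega
    have hqeq : q = (psiR r D).take q.length := List.prefix_iff_eq_take.1 hq
    have h := height_lemma hD hr hlen q.length hqlen
    rw [← hqeq] at h
    omega

/-- return at p=2r+2b iff closure iff decomposition -/
lemma ret_iff_closed {r n b : ℕ} {D : List Bool} (hD : IsDyck D) (hr : r < n)
    (hlen : D.length = 2 * n) (hb : r + b ≤ n) :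
    (((psiR r D).take (2*r+2*b)).count false = ((psiR r D).take (2*r+2*b)).count true)
    ↔ (∀ x < 2*n, (x < 2*r + b ∨ 2*n - b ≤ x) →
        (mfun D x < 2*r + b ∨ 2*n - b ≤ mfun D x)) := by
  have hp : 2*r + 2*b ≤ 2*n := by omega
  have hh := height_lemma hD hr hlen (2*r+2*b) hp
  have hchar := SpSet_char hr hb
  constructor
  · intro hret x hx hxS
    have hcard : (FpSet D r (2*n) (2*r+2*b)).card = 0 := by omega
    have hFempty : FpSet D r (2*n) (2*r+2*b) = ∅ := Finset.card_eq_zero.1 hcard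
    have hxmem : x ∈ SpSet r (2*n) (2*r+2*b) := (hchar x).2 (by omega)
    have hmx : mfun D x ∈ SpSet r (2*n) (2*r+2*b) := by
      by_contra hc
      have : x ∈ FpSet D r (2*n) (2*r+2*b) := by
        simp only [FpSet, Finset.mem_filter, Finset.mem_range]
        exact ⟨hx, hxmem, hc⟩
      rw [hFempty] at this
      simp at this
    have := (hchar (mfun D x)).1 hmx
    omega
  · intro hcl
    have hFempty : FpSet D r (2*n) (2*r+2*b) = ∅ := by
      rw [Finset.eq_empty_iff_forall_notMem]
      intro x hx
      simp only [FpSet, Finset.mem_filter, Finset.mem_range] at hx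
      obtain ⟨hxL, hxS, hxm⟩ := hx
      apply hxm
      have h1 := (hchar x).1 hxS
      have h2 := hcl x hxL (by rcases h1 with h | h; exacts [Or.inl h, Or.inr h.1])
      have hmL : mfun D x < 2*n := by
        have := mfun_lt hD (show x < D.length by omega); omega
      refine (hchar (mfun D x)).2 ?_
      rcases h2 with h | h
      · exact Or.inl h
      · exact Or.inr ⟨h, hmL⟩
    rw [hFempty] at hh
    simp at hh
    omega

/-- multitunnels of `D ∈ D_n` with midpoint at `x = n + r`
(i.e. `|A| = |C| + 2r`) correspond in number to arches of `D' = Ψ_r(D)` in `x ≥ 2r`. -/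
theorem mtunEq_eq_numArchesAfter (r n : ℕ) (D : List Bool) (hD : IsDyck D)
    (hlen : D.length = 2 * n) :
    mtunEq r D = numArchesAfter r (psiR r D) := by
  by_cases hr : r < n
  case neg =>
    -- trivial case: both sides are 0
    have h1 : mtunEq r D = 0 := by
      rw [mtunEq]
      convert Set.ncard_empty (ℕ × ℕ)
      rw [Set.eq_empty_iff_forall_notMem]
      rintro q ⟨A, B, C, hB, hBne, hw, h1, h2, h3⟩
      have hBlen : 1 ≤ B.length := List.length_pos_iff.2 hBne
      have : D.length = A.length + B.length + C.length := by rw [hw]; simp; omega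
      omega
    have h2 : numArchesAfter r (psiR r D) = 0 := by
      rw [numArchesAfter]
      convert Set.ncard_empty ℕ
      rw [Set.eq_empty_iff_forall_notMem]
      rintro i ⟨X, B, Y, hX, hB, hY, hw, h1, h2⟩
      have : (psiR r D).length = X.length + B.length + Y.length + 2 := by rw [hw]; simp; omega
      rw [length_psiR, hlen] at this
      omega
    rw [h1, h2]
  case pos =>
    have hKDyck := psiR_isDyck hD hr hlen
    have hKlen : (psiR r D).length = 2*n := by rw [length_psiR, hlen]
    set T : Set (ℕ × ℕ) := {q : ℕ × ℕ | ∃ A B C : List Bool, IsDyck B ∧ B ≠ [] ∧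
      D = A ++ B ++ C ∧ A.length = q.1 ∧ B.length = q.2 ∧ A.length = C.length + 2 * r}
      with hT
    set R : Set ℕ := {i : ℕ | ∃ X B Y : List Bool, IsDyck X ∧ IsDyck B ∧ IsDyck Y ∧
      psiR r D = X ++ true :: (B ++ false :: Y) ∧ X.length = i ∧ 2 * r ≤ X.length}
      with hR
    have hReq : R = {p : ℕ | 2*r ≤ p ∧ p < 2*n ∧
        ((psiR r D).take p).count false = ((psiR r D).take p).count true} := by
      ext p
      rw [hR]
      simp only [Set.mem_setOf_eq]
      constructor
      · rintro ⟨X, B, Y, hX, hB, hY, hw, hp, h2r⟩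
        have := (arch_iff hKDyck p).1 ⟨X, B, Y, hX, hB, hY, hw, hp⟩
        rw [hKlen] at this
        exact ⟨by omega, this.1, this.2⟩
      · rintro ⟨h2r, hp, hret⟩
        obtain ⟨X, B, Y, hX, hB, hY, hw, hp'⟩ :=
          (arch_iff hKDyck p).2 ⟨by rw [hKlen]; exact hp, hret⟩
        exact ⟨X, B, Y, hX, hB, hY, hw, hp', by omega⟩
    -- the bijection
    set f : ℕ × ℕ → ℕ := fun q => 2 * q.1 - 2 * r with hf
    have hInj : Set.InjOn f T := by
      rintro q hq q' hq' heq
      obtain ⟨A, B, C, hB, hBne, hw, h1, h2, h3⟩ := hq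
      obtain ⟨A', B', C', hB', hBne', hw', h1', h2', h3'⟩ := hq'
      have hL : D.length = A.length + B.length + C.length := by rw [hw]; simp; omega
      have hL' : D.length = A'.length + B'.length + C'.length := by rw [hw']; simp; omega
      rw [hf] at heq
      simp only at heq
      have hq1 : q.1 = q'.1 := by omega
      have hq2 : q.2 = q'.2 := by omega
      exact Prod.ext hq1 hq2
    have hImg : f '' T = R := by
      rw [hReq]
      ext p
      constructor
      · rintro ⟨q, hq, rfl⟩
        obtain ⟨A, B, C, hB, hBne, hw, h1, h2, h3⟩ := hq
        have hBlen : 1 ≤ B.length := List.length_pos_iff.2 hBne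
        have hL : D.length = A.length + B.length + C.length := by rw [hw]; simp; omega
        set b := C.length with hb
        have hfq : f q = 2*r + 2*b := by rw [hf]; simp only; omega
        have hrb : r + b ≤ n := by omega
        rw [hfq]
        refine ⟨by omega, by omega, ?_⟩
        rw [ret_iff_closed hD hr hlen hrb]
        intro x hx hxS
        have hxS' : x < A.length ∨ A.length + B.length ≤ x := by
          rcases hxS with h | h
          · left; omega
          · right; omega
        have hcl := closed_of_decomp hD hB hw x (by omega) hxS'
        rcases hcl with h | h
        · left; omega
        · right; omega
      · rintro ⟨h2r, hp, hret⟩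
        have hpeven : ∃ b, p = 2*r + 2*b := by
          have hcc := count_add_count ((psiR r D).take p)
          rw [List.length_take, hKlen] at hcc
          have : min p (2*n) = p := by omega
          rw [this] at hcc
          exact ⟨(p - 2*r)/2, by omega⟩
        obtain ⟨b, rfl⟩ := hpeven
        have hrb : r + b ≤ n := by omega
        have hcl := (ret_iff_closed hD hr hlen hrb).1 hret
        obtain ⟨A, B, C, hB, hw, hA, hC, hBl⟩ :=
          decomp_of_closed hD hlen (show (2*r+b) + b ≤ 2*n by omega)
            (by
              intro x hx hxS
              exact hcl x hx hxS)
        refine ⟨(2*r + b, 2*n - (2*r+2*b)), ⟨A, B, C, hB, ?_, hw, by simp [hA], by simp [hBl]; omega, by omega⟩, ?_⟩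
        · intro hBnil
          have : B.length = 0 := by rw [hBnil]; rfl
          omega
        · rw [hf]; simp only; omega
    have hmt : mtunEq r D = T.ncard := rfl
    have hna : numArchesAfter r (psiR r D) = R.ncard := rfl
    rw [hmt, hna, ← hImg, Set.ncard_image_of_injOn hInj]
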